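/- If H and H' are subgroups of (Z/nZ)² with |H| = |H'| = n and (Z/nZ)² is the internal direct sum of H and H', then for each generator h of H (assuming H is cyclic generated by h) there exists h' ∈ H' such that ⟨h, h'⟩_s = 1, where ⟨x,y⟩_s = x1y2 − x2y1. -/

import Mathlib

abbrev G (n : ℕ) := ZMod n × ZMod n

def symp {n : ℕ} (x y : G n) : ZMod n := x.1 * y.2 - x.2 * y.1

lemma symp_add_right {n : ℕ} (x a b : G n) :
    symp x (a + b) = symp x a + symp x b := by
  simp only [symp, Prod.fst_add, Prod.snd_add]; ring

lemma int2_smul_zero {d : ℤ} {b : ℤ × ℤ} (hd : d ≠ 0) (hb : d • b = 0) : b = 0 := by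
  rcases b with ⟨x, y⟩
  have h1 : d • x = 0 := congrArg Prod.fst hb
  have h2 : d • y = 0 := congrArg Prod.snd hb
  have e1 := (smul_eq_zero.mp h1).resolve_left hd
  have e2 := (smul_eq_zero.mp h2).resolve_left hd
  simp [e1, e2]

lemma key_int (p : ℤ × ℤ) (hp : Int.gcd p.1 p.2 = 1) :
    ∃ x : ℤ × ℤ, p.1 * x.2 - p.2 * x.1 = 1 := by
  refine ⟨⟨-(Int.gcdB p.1 p.2), Int.gcdA p.1 p.2⟩, ?_⟩
  have hbez := Int.gcd_eq_gcd_ab p.1 p.2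
  rw [hp] at hbez
  push_cast at hbez
  simp only
  linarith

lemma symp_zsmul_self {n : ℕ} (x : G n) (k : ℤ) : symp x (k • x) = 0 := by
  simp only [symp, Prod.smul_fst, Prod.smul_snd]
  rw [zsmul_eq_mul, zsmul_eq_mul]; ring

/-- If `H, H'` are order-`n` subgroups of `(Z/nZ)²` that are complementary, then every
generator `h` of `H` admits `h' ∈ H'` with `⟨h,h'⟩_s = 1`. -/
theorem stmt3 {n : ℕ} (H H' : AddSubgroup (G n))
    (hH : Nat.card H = n) (hH' : Nat.card H' = n)
    (hcompl : IsCompl H H') (h : G n) (hgen : AddSubgroup.zmultiples h = H) :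
    ∃ h' ∈ H', symp h h' = 1 := by
  have key : ∃ x : G n, symp h x = 1 := by
    match n, H, H', hH, hH', hcompl, h, hgen with
    | 0, H, H', hH, hH', hcompl, h, hgen =>
      -- here G 0 = ℤ × ℤ
      have hne : h ≠ 0 := by
        rintro rfl
        rw [← hgen] at hH
        simp at hH
      have h1 : (h.1 : ℤ) = h.1 := rfl
      obtain ⟨g1, hg1⟩ : ((Int.gcd h.1 h.2 : ℤ)) ∣ (h.1 : ℤ) := Int.gcd_dvd_left _ _
      obtain ⟨g2, hg2⟩ : ((Int.gcd h.1 h.2 : ℤ)) ∣ (h.2 : ℤ) := Int.gcd_dvd_right _ _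
      set d : ℤ := (Int.gcd h.1 h.2 : ℤ) with hd
      have hdne : d ≠ 0 := by
        simp only [hd, ne_eq, Int.natCast_eq_zero, Int.gcd_eq_zero_iff]
        intro hz
        exact hne (Prod.ext (Int.gcd_eq_zero_iff.mp hz).1 (Int.gcd_eq_zero_iff.mp hz).2)
      set g : G 0 := (g1, g2) with hgdef
      have hdg : d • g = h := by
        apply Prod.ext
        · show d * g1 = h.1
          exact hg1.symm
        · show d * g2 = h.2
          exact hg2.symm
      have hmem : g ∈ H ⊔ H' := by rw [hcompl.sup_eq_top]; trivial
      obtain ⟨a, ha, b, hb, hab⟩ := (AddSubgroup.mem_sup).mp hmem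
      rw [← hgen, AddSubgroup.mem_zmultiples_iff] at ha
      obtain ⟨k, hk⟩ := ha
      have hdb : d • b = (1 - d * k) • h := by
        have : b = g - k • h := by rw [← hk] at hab; rw [← hab]; abel
        rw [this, smul_sub, hdg, smul_smul, sub_smul, one_smul]
      have hdbH : d • b ∈ H := by
        rw [← hgen, AddSubgroup.mem_zmultiples_iff]
        exact ⟨1 - d * k, hdb.symm⟩
      have hdbH' : d • b ∈ H' := AddSubgroup.zsmul_mem H' hb d
      have hb0 : b = 0 :=
        int2_smul_zero hdne ((AddSubgroup.disjoint_def.mp hcompl.disjoint) hdbH hdbH')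
      have hga : g = k • h := by rw [hk, ← hab, hb0, add_zero]
      have hg0 : g ≠ 0 := by
        intro h0
        apply hne
        rw [← hdg, h0, smul_zero]
      have hd1 : d = 1 := by
        have hkd : (k * d - 1) • g = 0 := by
          rw [sub_smul, one_smul, mul_smul, hdg, ← hga, sub_self]
        have hz : k * d - 1 = 0 := by
          by_contra hne'
          exact hg0 (int2_smul_zero hne' hkd)
        have hdvd : d ∣ 1 := ⟨k, by linarith [mul_comm d k]⟩
        exact Int.eq_one_of_dvd_one (by simp [hd]) hdvd
      have hgcd : Int.gcd (h.1 : ℤ) (h.2 : ℤ) = 1 := by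
        have : (Int.gcd (h.1 : ℤ) (h.2 : ℤ) : ℤ) = 1 := by rw [← hd, hd1]
        exact_mod_cast this
      simp only [symp]
      exact key_int h hgcd
    | (m+1), H, H', hH, hH', hcompl, h, hgen =>
      have hord : addOrderOf h = m + 1 := by
        rw [← Nat.card_zmultiples h, hgen, hH]
      set a := h.1.val with hadef
      set b := h.2.val with hbdef
      set d := Nat.gcd (Nat.gcd a b) (m+1) with hddef
      have hdn : d ∣ (m+1) := Nat.gcd_dvd_right _ _
      have hda : d ∣ a := (Nat.gcd_dvd_left _ _).trans (Nat.gcd_dvd_left a b)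
      have hdb : d ∣ b := (Nat.gcd_dvd_left _ _).trans (Nat.gcd_dvd_right a b)
      obtain ⟨e, he⟩ := hdn
      have hd0 : d ≠ 0 := by
        intro h0
        rw [h0] at he
        simp at he
      have hd1 : d = 1 := by
        have hsm : e • h = 0 := by
          obtain ⟨a', ha'⟩ := hda
          obtain ⟨b', hb'⟩ := hdb
          apply Prod.ext
          · show e • h.1 = 0
            rw [nsmul_eq_mul, ← ZMod.natCast_rightInverse h.1, ← hadef,
              ← Nat.cast_mul, ZMod.natCast_eq_zero_iff]
            exact ⟨a', by rw [he, ha']; ring⟩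
          · show e • h.2 = 0
            rw [nsmul_eq_mul, ← ZMod.natCast_rightInverse h.2, ← hbdef,
              ← Nat.cast_mul, ZMod.natCast_eq_zero_iff]
            exact ⟨b', by rw [he, hb']; ring⟩
        have h1 : (m+1) ∣ e := by
          rw [← hord]
          exact addOrderOf_dvd_of_nsmul_eq_zero hsm
        have h2 : e ∣ (m+1) := ⟨d, by rw [he]; ring⟩
        have h3 : e = m + 1 := Nat.dvd_antisymm h2 h1
        rw [h3] at he
        have : d * (m+1) = 1 * (m+1) := by omega
        exact Nat.eq_of_mul_eq_mul_right (Nat.succ_pos m) this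
      obtain ⟨u, v, w, huvw⟩ : ∃ u v w : ℤ, (a:ℤ) * u + (b:ℤ) * v + ((m+1 : ℕ):ℤ) * w = 1 := by
        have h1 := Nat.gcd_eq_gcd_ab (Nat.gcd a b) (m+1)
        have h2 := Nat.gcd_eq_gcd_ab a b
        rw [← hddef, hd1] at h1
        push_cast at h1
        refine ⟨Nat.gcdA a b * Nat.gcdA (Nat.gcd a b) (m+1),
          Nat.gcdB a b * Nat.gcdA (Nat.gcd a b) (m+1),
          Nat.gcdB (Nat.gcd a b) (m+1), ?_⟩
        push_cast
        linear_combination (-1 : ℤ) * h1 - (Nat.gcdA (Nat.gcd a b) (m+1)) * h2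
      refine ⟨(((-v : ℤ) : ZMod (m+1)), ((u : ℤ) : ZMod (m+1))), ?_⟩
      have hc := congrArg (fun z : ℤ => (z : ZMod (m+1))) huvw
      push_cast at hc
      have hz : ((m : ZMod (m+1)) + 1) = 0 := by
        have := ZMod.natCast_self (m+1)
        push_cast at this
        exact this
      rw [hz, hadef, hbdef] at hc
      rw [ZMod.natCast_rightInverse h.1, ZMod.natCast_rightInverse h.2] at hc
      simp only [symp]
      push_cast
      linear_combination hc
  obtain ⟨x, hx⟩ := key
  have hmem : x ∈ H ⊔ H' := by rw [hcompl.sup_eq_top]; trivial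
  obtain ⟨a, ha, b, hb, hab⟩ := (AddSubgroup.mem_sup).mp hmem
  refine ⟨b, hb, ?_⟩
  rw [← hgen, AddSubgroup.mem_zmultiples_iff] at ha
  obtain ⟨k, hk⟩ := ha
  have h2 : symp h x = symp h a + symp h b := by rw [← hab, symp_add_right]
  rw [hx, ← hk, symp_zsmul_self, zero_add] at h2
  exact h2.symm
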